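/- Let K be a field, n, m ≥ 1, and fix column indices k ≠ l in {1,…,m}. Let B and B′ be n×m matrices over K such that: (i) the k-th column of B is nonzero; (ii) B_{ij} = B′_{ij} for all i and all j ≠ l; and (iii) B_{ik}·B_{i′l} − B_{i′k}·B_{il} = B′_{ik}·B′_{i′l} − B′_{i′k}·B′_{il} for all row indices i, i′. Then there exists t ∈ K such that B′_{il} = B_{il} + t·B_{ik} for all i, i.e. B′ = B·(I + t·E_{kl}). -/

import Mathlib

open Matrix

/-- Separation content of Lemma 4.4: the functions `B ↦ B_{ij}` (`j ≠ l`) and the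
`2 × 2` minors `B ↦ B_{ik}B_{i'l} − B_{i'k}B_{il}` separate one-dimensional orbits of
the column operation group `B ↦ B·(I + t·E_{kl})`. -/
theorem column_orbit_separation
    {K : Type*} [Field K] {n m : ℕ} (hn : 1 ≤ n) (hm : 1 ≤ m)
    (k l : Fin m) (hkl : k ≠ l)
    (B B' : Matrix (Fin n) (Fin m) K)
    (hcol : ∃ i, B i k ≠ 0)
    (heq : ∀ (i : Fin n) (j : Fin m), j ≠ l → B i j = B' i j)
    (hminor : ∀ i i' : Fin n,
      B i k * B i' l - B i' k * B i l = B' i k * B' i' l - B' i' k * B' i l) :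
    ∃ t : K, (∀ i, B' i l = B i l + t * B i k) ∧
      B' = B * (1 + t • Matrix.single k l (1 : K)) := by
  obtain ⟨i0, hi0⟩ := hcol
  set t := (B' i0 l - B i0 l) / B i0 k with ht
  have hk : ∀ i, B' i k = B i k := fun i => (heq i k hkl).symm
  have hmain : ∀ i, B' i l = B i l + t * B i k := by
    intro i
    have h := hminor i0 i
    rw [hk, hk] at h
    rw [ht]
    field_simp
    linear_combination -h
  refine ⟨t, hmain, ?_⟩
  ext i j
  rw [Matrix.mul_add, Matrix.mul_one]
  simp only [Matrix.add_apply, Matrix.mul_apply, Matrix.smul_apply, Matrix.single,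
    Matrix.of_apply, smul_eq_mul, mul_ite, mul_one, mul_zero, Finset.sum_ite_eq',
    Finset.mem_univ, if_true]
  by_cases hj : j = l
  · subst hj
    simp [hmain i, mul_comm]
  · simp [hj, (heq i j hj).symm, Ne.symm hj]
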